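/- Suppose α, λ ∈ ℂ and n is an integer with S_{n-1}(λ)·α - S_{n-2}(λ) = 0. Then (α² - α·λ + 1)·S_{n-1}(λ)² = 1. -/

import Mathlib

theorem stmt13 (α lam : ℂ) (S : ℤ → ℂ) (hS0 : S 0 = 1) (hS1 : S 1 = lam)
    (hrec : ∀ i : ℤ, S (i + 1) = lam * S i - S (i - 1))
    (n : ℤ) (h : S (n - 1) * α - S (n - 2) = 0) :
    (α ^ 2 - α * lam + 1) * (S (n - 1)) ^ 2 = 1 := by
  have hm1 : S (-1) = 0 := by
    have := hrec 0
    simp only [zero_add, zero_sub] at this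
    rw [hS1, hS0] at this
    linear_combination this
  have key : ∀ i : ℤ, S i ^ 2 - lam * S i * S (i - 1) + S (i - 1) ^ 2 = 1 := by
    intro i
    induction i using Int.induction_on with
    | zero => simp [hS0, hm1]
    | succ i ih =>
      have h1 := hrec i
      have e : (i : ℤ) + 1 - 1 = i := by ring
      rw [e]
      linear_combination (S (i + 1) - S (i - 1)) * h1 + ih
    | pred i ih =>
      have h2 := hrec (-(i : ℤ) - 1)
      have e1 : -(i : ℤ) - 1 + 1 = -i := by ring
      have e2 : -(i : ℤ) - 1 - 1 = -(i + 1) - 1 := by ring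
      rw [e1, e2] at h2
      rw [show (-(i : ℤ) - 1 - 1) = (-(i + 1) - 1) from e2]
      linear_combination ih + (S (-((i : ℤ) + 1) - 1) - S (-i)) * h2
  have k := key (n - 1)
  have e : n - 1 - 1 = n - 2 := by ring
  rw [e] at k
  linear_combination k + (α * S (n - 1) + S (n - 2) - lam * S (n - 1)) * h
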